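/- Let λ be a partition of length r and let n ∈ N_λ. Then the exceptional Hermite polynomial P_n satisfies the second-order differential equation, written as a polynomial identity: H_λ(x) P_n''(x) − 2(x H_λ(x) + H_λ'(x)) P_n'(x) + (H_λ''(x) + 2x H_λ'(x) + (2n − 2|λ|) H_λ(x)) P_n(x) = 0 for all x. -/

import Mathlib

open Polynomial

/-- The physicists' Hermite polynomials: `H 0 = 1`, `H (n+1) = 2X * H n - (H n)'`. -/
noncomputable def physHermite : ℕ → Polynomial ℝ
  | 0 => 1
  | n + 1 => 2 * X * physHermite n - derivative (physHermite n)

/-- Wronskian determinant of a finite family of polynomials. -/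
noncomputable def Wron {m : ℕ} (f : Fin m → Polynomial ℝ) : Polynomial ℝ :=
  Matrix.det (Matrix.of fun i j : Fin m => (fun p => derivative p)^[(i : ℕ)] (f j))

/-- `lam : Fin r → ℕ` is a partition: weakly decreasing with positive parts. -/
def IsPartition (r : ℕ) (lam : Fin r → ℕ) : Prop :=
  (∀ i j : Fin r, i ≤ j → lam j ≤ lam i) ∧ ∀ i, 1 ≤ lam i

/-- An even (double) partition: `r` even and `λ_{2k-1} = λ_{2k}`. -/
def IsEvenPartition (r : ℕ) (lam : Fin r → ℕ) : Prop :=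
  IsPartition r lam ∧ Even r ∧
    ∀ k : ℕ, ∀ h : 2 * k + 1 < r, lam ⟨2 * k, by omega⟩ = lam ⟨2 * k + 1, h⟩

/-- The generalized Hermite polynomial `H_λ = Wr[H_{λ_r}, H_{λ_{r-1}+1}, …, H_{λ_1+r-1}]`. -/
noncomputable def genHermite (r : ℕ) (lam : Fin r → ℕ) : Polynomial ℝ :=
  Wron fun j : Fin r => physHermite (lam (Fin.rev j) + j)

/-- The exceptional Hermite polynomial
`P_n = Wr[H_{λ_r}, H_{λ_{r-1}+1}, …, H_{λ_1+r-1}, H_{n-|λ|+r}]`. -/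
noncomputable def XHermite (r : ℕ) (lam : Fin r → ℕ) (n : ℕ) : Polynomial ℝ :=
  Wron fun j : Fin (r + 1) =>
    if h : (j : ℕ) < r then physHermite (lam (Fin.rev ⟨(j : ℕ), h⟩) + j)
    else physHermite (n + r - ∑ i, lam i)

/-- The degree sequence `N_λ`: `n ≥ |λ| - r` and `n ≠ |λ| + λ_j - j` for `j = 1, …, r`. -/
def XDegSeq (r : ℕ) (lam : Fin r → ℕ) (n : ℕ) : Prop :=
  (∑ i, lam i) ≤ n + r ∧ ∀ i : Fin r, n ≠ (∑ i, lam i) + lam i - ((i : ℕ) + 1)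

lemma physHermite_succ (n : ℕ) :
    physHermite (n + 1) = 2 * X * physHermite n - derivative (physHermite n) := rfl

lemma derivative_physHermite (n : ℕ) :
    derivative (physHermite n) = C (2 * (n : ℝ)) * physHermite (n - 1) := by
  induction n using Nat.twoStepInduction with
  | zero => simp [physHermite]
  | one =>
    norm_num [physHermite, map_ofNat]
  | more n ih1 ih2 =>
    have hrec : physHermite (n + 1) = 2 * X * physHermite n - C (2*(n:ℝ)) * physHermite (n-1) := by
      rw [physHermite_succ, ih1]
    have e1 : derivative (physHermite (n+2)) = 2 * physHermite (n+1)
        + 2*X*derivative (physHermite (n+1)) - derivative (derivative (physHermite (n+1))) := by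
      rw [physHermite_succ (n+1)]
      simp only [derivative_sub, derivative_mul, derivative_X, derivative_ofNat]
      ring
    rw [show n+2-1 = n+1 from rfl, e1, ih2, show n+1-1 = n from rfl]
    simp only [derivative_mul, derivative_C]
    rw [ih1, hrec]
    push_cast
    simp only [map_add, map_mul, map_one, map_ofNat, C_eq_natCast]
    ring

lemma physHermite_ode (n : ℕ) :
    derivative (derivative (physHermite n)) =
      2 * X * derivative (physHermite n) - C (2 * (n : ℝ)) * physHermite n := by
  cases n with
  | zero => simp [physHermite]
  | succ m =>
    have hrec : derivative (physHermite m) = 2 * X * physHermite m - physHermite (m+1) := by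
      rw [physHermite_succ]; ring
    rw [derivative_physHermite (m+1)]
    simp only [derivative_mul, derivative_C, Nat.add_sub_cancel]
    rw [hrec]
    push_cast
    simp only [map_add, map_mul, map_one, map_ofNat, C_eq_natCast]
    ring

lemma physHermite_natDegree_le (n : ℕ) : (physHermite n).natDegree ≤ n := by
  induction n with
  | zero => simp [physHermite]
  | succ m ih =>
    rw [physHermite_succ]
    refine le_trans (natDegree_sub_le _ _) ?_
    simp only [sup_le_iff]  -- maybe max
    constructor
    · calc (2 * X * physHermite m).natDegree ≤ (2*X : ℝ[X]).natDegree + (physHermite m).natDegree :=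
            natDegree_mul_le
        _ ≤ 1 + m := by
            have : (2*X : ℝ[X]).natDegree ≤ 1 := by
              refine le_trans natDegree_mul_le ?_; simp
            omega
        _ = m + 1 := by omega
    · have := natDegree_derivative_le (physHermite m)
      omega

lemma physHermite_coeff (n : ℕ) : (physHermite n).coeff n = 2 ^ n := by
  induction n with
  | zero => simp [physHermite]
  | succ m ih =>
    rw [physHermite_succ, coeff_sub]
    have h1 : (2 * X * physHermite m).coeff (m+1) = 2 * (physHermite m).coeff m := by
      rw [mul_assoc, (map_ofNat (C : ℝ →+* ℝ[X]) 2).symm, coeff_C_mul, coeff_X_mul]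
    have h2 : (derivative (physHermite m)).coeff (m+1) = 0 := by
      apply coeff_eq_zero_of_natDegree_lt
      have := natDegree_derivative_le (physHermite m)
      have := physHermite_natDegree_le m
      omega
    rw [h1, h2, ih]
    ring

lemma physHermite_natDegree (n : ℕ) : (physHermite n).natDegree = n := by
  refine le_antisymm (physHermite_natDegree_le n) ?_
  apply le_natDegree_of_ne_zero
  rw [physHermite_coeff]
  positivity

lemma physHermite_ne_zero (n : ℕ) : physHermite n ≠ 0 := by
  intro h
  have := physHermite_coeff n
  rw [h] at this
  simp at this
  have h2 : (0:ℝ) < 2 ^ n := by positivity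
  linarith

lemma derivative_finset_prod {ι : Type*} [DecidableEq ι] (s : Finset ι) (g : ι → ℝ[X]) :
    derivative (∏ i ∈ s, g i) = ∑ i ∈ s, (∏ j ∈ s.erase i, g j) * derivative (g i) := by
  induction s using Finset.induction_on with
  | empty => simp
  | @insert a s ha ih =>
    rw [Finset.prod_insert ha, derivative_mul, Finset.sum_insert ha, ih,
      Finset.erase_insert ha]
    have hQ : ∀ i ∈ s, (∏ j ∈ (insert a s).erase i, g j) * derivative (g i)
        = g a * ((∏ j ∈ s.erase i, g j) * derivative (g i)) := by
      intro i hi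
      rw [Finset.erase_insert_of_ne (by rintro rfl; exact ha hi),
        Finset.prod_insert (fun h => ha (Finset.mem_of_mem_erase h))]
      ring
    rw [Finset.sum_congr rfl hQ, ← Finset.mul_sum]
    ring

-- Leibniz rule for determinant of polynomial matrices
lemma derivative_det {t : ℕ} (M : Matrix (Fin t) (Fin t) ℝ[X]) :
    derivative M.det = ∑ r, (M.updateRow r (fun j => derivative (M r j))).det := by
  classical
  simp only [Matrix.det_apply]
  rw [map_sum]
  rw [Finset.sum_comm]
  refine Finset.sum_congr rfl fun σ _ => ?_
  have hz : ∀ p : ℝ[X], ∀ z : ℤˣ, derivative (z • p) = z • derivative p := by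
    intro p z
    rcases Int.units_eq_one_or z with h | h <;> simp [h]
  rw [hz]
  rw [derivative_finset_prod]
  rw [← Finset.smul_sum]
  congr 1
  -- reindex RHS sum over rows r by r = σ i
  rw [← Equiv.sum_comp σ (fun r => ∏ i, (M.updateRow r fun j => derivative (M r j)) (σ i) i)]
  refine Finset.sum_congr rfl fun i₀ _ => ?_
  rw [← Finset.mul_prod_erase Finset.univ _ (Finset.mem_univ i₀)]
  rw [mul_comm]
  congr 1
  · rw [Matrix.updateRow_self]
  · refine Finset.prod_congr rfl fun i hi => ?_
    have hne : σ i ≠ σ i₀ := by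
      simp only [Finset.mem_erase] at hi
      exact fun h => hi.1 (σ.injective h)
    rw [Matrix.updateRow_ne hne]

noncomputable def WronS {m : ℕ} (e : Fin m → ℕ) (f : Fin m → ℝ[X]) : ℝ[X] :=
  (Matrix.of fun i j : Fin m => (fun p : ℝ[X] => derivative p)^[e i] (f j)).det

lemma Wron_eq_WronS {m : ℕ} (f : Fin m → ℝ[X]) :
    ((Matrix.of fun i j : Fin m => (fun p : ℝ[X] => derivative p)^[(i:ℕ)] (f j)) :
      Matrix (Fin m) (Fin m) ℝ[X]).det = WronS (fun i => (i : ℕ)) f := rfl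

lemma WronS_eq_zero {m : ℕ} (e : Fin m → ℕ) (f : Fin m → ℝ[X]) {i₁ i₂ : Fin m}
    (hne : i₁ ≠ i₂) (he : e i₁ = e i₂) : WronS e f = 0 := by
  apply Matrix.det_zero_of_row_eq hne
  funext j
  simp [Matrix.of_apply, he]

lemma derivative_WronS {m : ℕ} (e : Fin m → ℕ) (f : Fin m → ℝ[X]) :
    derivative (WronS e f) = ∑ r, WronS (Function.update e r (e r + 1)) f := by
  rw [WronS, derivative_det]
  refine Finset.sum_congr rfl fun r _ => ?_
  congr 1
  funext i j
  by_cases h : i = r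
  · subst h
    rw [Matrix.updateRow_self]
    simp only [Matrix.of_apply, Function.update_self]
    rw [Function.iterate_succ_apply']
  · rw [Matrix.updateRow_ne h]
    simp only [Matrix.of_apply, Function.update_of_ne h]

section DJ
open Matrix
variable {R : Type*} [CommRing R]

lemma adjugate_eq_minor {n : ℕ} (A : Matrix (Fin (n+1)) (Fin (n+1)) R) (i j : Fin (n+1)) :
    adjugate A i j =
      (-1 : R) ^ ((i : ℕ) + (j : ℕ)) * (A.submatrix j.succAbove i.succAbove).det := by
  rw [adjugate_apply, det_succ_row _ j]
  rw [Finset.sum_eq_single i]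
  · rw [updateRow_self]
    simp only [Pi.single_eq_same, mul_one]
    congr 1
    · rw [add_comm]
    · congr 1
      ext a b
      rw [submatrix_apply, updateRow_ne (Fin.succAbove_ne j a), submatrix_apply]
  · intro l _ hl
    rw [updateRow_self]
    rw [Pi.single_eq_of_ne hl]
    ring
  · intro h
    exact absurd (Finset.mem_univ i) h

variable {n : ℕ}

private def uu : Fin (n+2) := ⟨n, by omega⟩
private def vv : Fin (n+2) := ⟨n+1, by omega⟩

lemma dj_aux (A : Matrix (Fin (n+2)) (Fin (n+2)) R) :
    A.det * (adjugate A uu uu * adjugate A vv vv - adjugate A uu vv * adjugate A vv uu)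
      = A.det ^ 2 *
        (A.submatrix (Fin.castLE (by omega : n ≤ n + 2)) (Fin.castLE (by omega))).det := by
  classical
  set e : Fin n ⊕ Fin 2 ≃ Fin (n+2) := finSumFinEquiv
  have heu : e (Sum.inr 0) = uu := by simp [e, finSumFinEquiv, uu]; rfl
  have hev : e (Sum.inr 1) = vv := by simp [e, finSumFinEquiv, vv]; rfl
  have hel : ∀ b : Fin n, e (Sum.inl b) = Fin.castLE (by omega) b := by
    intro b; simp [e, finSumFinEquiv]; rfl
  have hinl_ne : ∀ (b : Fin n) (k : Fin 2), e (Sum.inl b) ≠ e (Sum.inr k) := by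
    intro b k h
    exact Sum.inl_ne_inr (e.injective h)
  have huv : (vv : Fin (n+2)) ≠ uu := by simp [uu, vv, Fin.ext_iff]
  -- the matrix of two adjugate columns
  set C : Matrix (Fin (n+2)) (Fin (n+2)) R := Matrix.of fun i j =>
    if j = uu then adjugate A i uu else if j = vv then adjugate A i vv
    else if i = j then 1 else 0 with hC
  have hCsub : C.submatrix e e =
      fromBlocks 1 (Matrix.of fun a k => adjugate A (e (Sum.inl a)) (e (Sum.inr k))) 0
        (Matrix.of fun c k => adjugate A (e (Sum.inr c)) (e (Sum.inr k))) := by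
    ext i j
    cases i with
    | inl a =>
      cases j with
      | inl b =>
        have h1 : e (Sum.inl b) ≠ uu := by rw [← heu]; exact hinl_ne b 0
        have h2 : e (Sum.inl b) ≠ vv := by rw [← hev]; exact hinl_ne b 1
        simp only [submatrix_apply, hC, Matrix.of_apply, if_neg h1, if_neg h2, fromBlocks_apply₁₁]
        by_cases hab : a = b
        · simp [hab, Matrix.one_apply]
        · rw [if_neg (fun h => hab (Sum.inl.inj (e.injective h))), Matrix.one_apply,
            if_neg hab]
      | inr k =>
        fin_cases k <;>
          simp [hC, submatrix_apply, fromBlocks_apply₁₂, heu, hev, (hinl_ne a 0).trans_eq heu,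
            uu, vv, Fin.ext_iff] <;> try rfl
    | inr c =>
      cases j with
      | inl b =>
        have h1 : e (Sum.inl b) ≠ uu := by rw [← heu]; exact hinl_ne b 0
        have h2 : e (Sum.inl b) ≠ vv := by rw [← hev]; exact hinl_ne b 1
        have h3 : e (Sum.inr c) ≠ e (Sum.inl b) := fun h => (hinl_ne b c h.symm)
        simp only [submatrix_apply, hC, Matrix.of_apply, if_neg h1, if_neg h2, if_neg h3, fromBlocks_apply₂₁,
          Matrix.zero_apply]
      | inr k =>
        fin_cases k <;> simp [hC, submatrix_apply, fromBlocks_apply₂₂, heu, hev, huv]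
  have hdetC : C.det = adjugate A uu uu * adjugate A vv vv - adjugate A uu vv * adjugate A vv uu := by
    rw [← det_submatrix_equiv_self e C, hCsub, det_fromBlocks_zero₂₁, det_one, one_mul,
      det_fin_two]
    simp only [Matrix.of_apply]; rw [heu, hev]
  have hcol : ∀ i j, (A * C) i j = if j = uu then (if i = uu then A.det else 0)
      else if j = vv then (if i = vv then A.det else 0) else A i j := by
    intro i j
    by_cases hju : j = uu
    · subst hju
      have h1 : (A * C) i uu = (A * adjugate A) i uu := by
        rw [mul_apply, mul_apply]
        refine Finset.sum_congr rfl fun k _ => ?_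
        simp [hC]
      rw [h1, mul_adjugate, Matrix.smul_apply, Matrix.one_apply, if_pos rfl]
      by_cases hiu : i = uu <;> simp [hiu]
    · by_cases hjv : j = vv
      · subst hjv
        have h1 : (A * C) i vv = (A * adjugate A) i vv := by
          rw [mul_apply, mul_apply]
          refine Finset.sum_congr rfl fun k _ => ?_
          simp [hC, huv]
        rw [h1, mul_adjugate, Matrix.smul_apply, Matrix.one_apply, if_neg hju, if_pos rfl]
        by_cases hiv : i = vv <;> simp [hiv]
      · rw [if_neg hju, if_neg hjv, mul_apply]
        rw [Finset.sum_eq_single j]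
        · simp [hC, hju, hjv]
        · intro k _ hk
          simp only [hC, Matrix.of_apply]
          rw [if_neg (by rintro rfl; exact hju rfl), if_neg (by rintro rfl; exact hjv rfl),
            if_neg hk, mul_zero]
        · intro h; exact absurd (Finset.mem_univ j) h
  have hk2 : ∀ k : Fin 2, e (Sum.inr k) = uu ∨ e (Sum.inr k) = vv := by
    intro k
    fin_cases k
    · exact Or.inl heu
    · exact Or.inr hev
  have hAC : (A * C).submatrix e e = fromBlocks
      (A.submatrix (fun a : Fin n => e (Sum.inl a)) (fun b : Fin n => e (Sum.inl b))) 0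
      (Matrix.of fun (c : Fin 2) (b : Fin n) => A (e (Sum.inr c)) (e (Sum.inl b)))
      (A.det • (1 : Matrix (Fin 2) (Fin 2) R)) := by
    ext i j
    cases i with
    | inl a =>
      cases j with
      | inl b =>
        have h1 : e (Sum.inl b) ≠ uu := by rw [← heu]; exact hinl_ne b 0
        have h2 : e (Sum.inl b) ≠ vv := by rw [← hev]; exact hinl_ne b 1
        simp only [submatrix_apply, hcol, if_neg h1, if_neg h2, fromBlocks_apply₁₁]
      | inr k =>
        have h1 : e (Sum.inl a) ≠ uu := by rw [← heu]; exact hinl_ne a 0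
        have h2 : e (Sum.inl a) ≠ vv := by rw [← hev]; exact hinl_ne a 1
        rcases hk2 k with hk | hk
        · rw [submatrix_apply, hcol, if_pos hk, if_neg h1, fromBlocks_apply₁₂,
            Matrix.zero_apply]
        · have hne1 : e (Sum.inr k) ≠ uu := by rw [hk]; exact huv
          rw [submatrix_apply, hcol, if_neg hne1, if_pos hk, if_neg h2, fromBlocks_apply₁₂,
            Matrix.zero_apply]
    | inr c =>
      cases j with
      | inl b =>
        have h1 : e (Sum.inl b) ≠ uu := by rw [← heu]; exact hinl_ne b 0
        have h2 : e (Sum.inl b) ≠ vv := by rw [← hev]; exact hinl_ne b 1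
        simp only [submatrix_apply, hcol, if_neg h1, if_neg h2, fromBlocks_apply₂₁, Matrix.of_apply]
      | inr k =>
        rcases hk2 k with hk | hk
        · rw [submatrix_apply, hcol, if_pos hk, ← hk, fromBlocks_apply₂₂, Matrix.smul_apply,
            Matrix.one_apply, smul_eq_mul]
          by_cases hck : c = k
          · rw [if_pos (by rw [hck]), if_pos hck, mul_one]
          · rw [if_neg (fun h => hck (Sum.inr.inj (e.injective h))), if_neg hck, mul_zero]
        · have hne1 : e (Sum.inr k) ≠ uu := by rw [hk]; exact huv
          rw [submatrix_apply, hcol, if_neg hne1, if_pos hk, ← hk, fromBlocks_apply₂₂,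
            Matrix.smul_apply, Matrix.one_apply, smul_eq_mul]
          by_cases hck : c = k
          · rw [if_pos (by rw [hck]), if_pos hck, mul_one]
          · rw [if_neg (fun h => hck (Sum.inr.inj (e.injective h))), if_neg hck, mul_zero]
  have hdetAC : (A * C).det = A.det ^ 2 *
      (A.submatrix (Fin.castLE (by omega : n ≤ n + 2)) (Fin.castLE (by omega))).det := by
    rw [← det_submatrix_equiv_self e (A * C), hAC, det_fromBlocks_zero₁₂, det_smul, det_one,
      mul_one]
    rw [show (fun a : Fin n => e (Sum.inl a)) = Fin.castLE (by omega : n ≤ n + 2) from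
      funext hel]
    simp only [Fintype.card_fin]
    ring
  calc A.det * (adjugate A uu uu * adjugate A vv vv - adjugate A uu vv * adjugate A vv uu)
      = A.det * C.det := by rw [hdetC]
    _ = (A * C).det := (det_mul A C).symm
    _ = _ := hdetAC

-- Desnanot–Jacobi via generic matrices
lemma dj_adj (A : Matrix (Fin (n+2)) (Fin (n+2)) R) :
    adjugate A uu uu * adjugate A vv vv - adjugate A uu vv * adjugate A vv uu
      = A.det * (A.submatrix (Fin.castLE (by omega : n ≤ n + 2)) (Fin.castLE (by omega))).det := by
  classical
  set R₀ := MvPolynomial (Fin (n+2) × Fin (n+2)) ℤ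
  set G : Matrix (Fin (n+2)) (Fin (n+2)) R₀ := Matrix.of fun i j => MvPolynomial.X (i, j) with hG
  have hdetG : G.det ≠ 0 := by
    intro h
    have h1 : (MvPolynomial.eval (fun p : Fin (n+2) × Fin (n+2) =>
        if p.1 = p.2 then (1 : ℤ) else 0)) G.det = 1 := by
      rw [RingHom.map_det]
      have hm : (MvPolynomial.eval (fun p : Fin (n+2) × Fin (n+2) =>
          if p.1 = p.2 then (1 : ℤ) else 0)).mapMatrix G = 1 := by
        ext i j
        simp [hG, RingHom.mapMatrix_apply, Matrix.map_apply, Matrix.one_apply]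
      rw [hm, det_one]
    rw [h] at h1
    simp at h1
  have key : adjugate G uu uu * adjugate G vv vv - adjugate G uu vv * adjugate G vv uu
      = G.det * (G.submatrix (Fin.castLE (by omega : n ≤ n + 2)) (Fin.castLE (by omega))).det := by
    have h := dj_aux G
    rw [pow_two, mul_assoc] at h
    exact mul_left_cancel₀ hdetG h
  set ψ : R₀ →+* R := MvPolynomial.eval₂Hom (Int.castRingHom R) (fun p => A p.1 p.2) with hψ
  have hmap : ψ.mapMatrix G = A := by
    ext i j
    simp only [hG, hψ, RingHom.mapMatrix_apply, Matrix.map_apply, Matrix.of_apply]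
    exact MvPolynomial.eval₂Hom_X' _ _ _
  have hadj : ∀ i j : Fin (n+2), ψ (adjugate G i j) = adjugate A i j := by
    intro i j
    have h2 := RingHom.map_adjugate ψ G
    have h3 : ψ (adjugate G i j) = (ψ.mapMatrix (adjugate G)) i j := rfl
    rw [h3, h2, hmap]
  have hdet' : ψ G.det = A.det := by rw [RingHom.map_det, hmap]
  have hsub : ψ ((G.submatrix (Fin.castLE (by omega : n ≤ n + 2))
      (Fin.castLE (by omega))).det) = (A.submatrix (Fin.castLE (by omega : n ≤ n + 2))
      (Fin.castLE (by omega))).det := by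
    rw [RingHom.map_det]
    congr 1
    ext i j
    simp only [RingHom.mapMatrix_apply, Matrix.map_apply, submatrix_apply]
    have h4 : ψ (G (Fin.castLE (by omega : n ≤ n+2) i) (Fin.castLE (by omega) j))
        = A (Fin.castLE (by omega : n ≤ n+2) i) (Fin.castLE (by omega) j) := by
      conv_rhs => rw [← hmap]
      rfl
    exact h4
  have hfinal := congrArg ψ key
  simp only [_root_.map_sub, _root_.map_mul] at hfinal
  rw [hadj, hadj, hadj, hadj, hdet', hsub] at hfinal
  exact hfinal

theorem desnanot_jacobi (A : Matrix (Fin (n+2)) (Fin (n+2)) R) :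
    (A.submatrix (uu (n := n)).succAbove uu.succAbove).det *
        (A.submatrix (vv (n := n)).succAbove vv.succAbove).det
      - (A.submatrix (uu (n := n)).succAbove vv.succAbove).det *
        (A.submatrix (vv (n := n)).succAbove uu.succAbove).det
      = A.det *
        (A.submatrix (Fin.castLE (by omega : n ≤ n + 2)) (Fin.castLE (by omega))).det := by
  have h := dj_adj A
  rw [adjugate_eq_minor, adjugate_eq_minor, adjugate_eq_minor, adjugate_eq_minor] at h
  have h1 : (-1 : R) ^ ((uu (n:=n) : ℕ) + (uu (n:=n) : ℕ)) = 1 :=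
    Even.neg_one_pow ⟨(uu (n:=n) : ℕ), by ring⟩
  have h2 : (-1 : R) ^ ((vv (n:=n) : ℕ) + (vv (n:=n) : ℕ)) = 1 :=
    Even.neg_one_pow ⟨(vv (n:=n) : ℕ), by ring⟩
  have h4 : (-1 : R) ^ ((uu (n:=n) : ℕ) + (vv (n:=n) : ℕ)) = -1 :=
    Odd.neg_one_pow ⟨n, by simp [uu, vv]; ring⟩
  have h5 : (-1 : R) ^ ((vv (n:=n) : ℕ) + (uu (n:=n) : ℕ)) = -1 :=
    Odd.neg_one_pow ⟨n, by simp [uu, vv]; ring⟩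
  rw [h1, h2, h4, h5] at h
  linear_combination h

end DJ

lemma iterate_deriv_coe (p : ℝ[X]) (k : ℕ) :
    (fun q : ℝ[X] => derivative q)^[k] p = derivative^[k] p := rfl

theorem wron_hermite_ne_zero {s : ℕ} (d : Fin s → ℕ) (hd : StrictMono d) :
    WronS (fun i => (i : ℕ)) (fun j => physHermite (d j)) ≠ 0 := by
  classical
  set N : ℕ := ∑ j, (d j - (j : ℕ)) with hN
  have hdj : ∀ j : Fin s, (j : ℕ) ≤ d j := by
    have haux : ∀ k : ℕ, ∀ j : Fin s, (j : ℕ) = k → k ≤ d j := by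
      intro k
      induction k with
      | zero => intro j _; exact Nat.zero_le _
      | succ k ih =>
        intro j hj
        have hk : k < s := by omega
        have h1 := ih ⟨k, hk⟩ rfl
        have h2 : (⟨k, hk⟩ : Fin s) < j := by
          rw [Fin.lt_def]; simp; omega
        have := hd h2
        omega
    intro j
    exact haux (j : ℕ) j rfl
  -- the coefficient of the Wronskian at degree N equals an explicit nonzero determinant
  have key : (WronS (fun i => (i : ℕ)) (fun j => physHermite (d j))).coeff N
      = (Matrix.of (fun i j : Fin s =>
          ((2:ℝ) ^ (d j) * ((d j).descFactorial (i : ℕ) : ℝ)))).det := by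
    rw [WronS, Matrix.det_apply, Matrix.det_apply]
    rw [finset_sum_coeff]
    refine Finset.sum_congr rfl fun σ _ => ?_
    rw [Polynomial.coeff_smul]
    congr 1
    by_cases hσ : ∀ i : Fin s, ((σ i : Fin s) : ℕ) ≤ d i
    · -- good permutation : coefficient = product of leading coefficients
      have hfac : ∀ i : Fin s,
          (derivative^[((σ i : Fin s) : ℕ)] (physHermite (d i))).natDegree = d i - (σ i : Fin s)
          ∧ (derivative^[((σ i : Fin s) : ℕ)] (physHermite (d i))).coeff (d i - ((σ i : Fin s):ℕ))
            = (2:ℝ) ^ (d i) * ((d i).descFactorial ((σ i : Fin s) : ℕ) : ℝ) := by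
        intro i
        have h1 : (derivative^[((σ i : Fin s) : ℕ)] (physHermite (d i))).coeff
            (d i - ((σ i : Fin s):ℕ))
            = (2:ℝ) ^ (d i) * ((d i).descFactorial ((σ i : Fin s) : ℕ) : ℝ) := by
          rw [Polynomial.coeff_iterate_derivative]
          rw [Nat.sub_add_cancel (hσ i)]
          rw [physHermite_coeff]
          rw [nsmul_eq_mul]
          ring
        constructor
        · refine le_antisymm ?_ ?_
          · have := Polynomial.natDegree_iterate_derivative (physHermite (d i))
              ((σ i : Fin s) : ℕ)
            rw [physHermite_natDegree] at this
            exact this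
          · apply Polynomial.le_natDegree_of_ne_zero
            rw [h1]
            have hne : (d i).descFactorial ((σ i : Fin s) : ℕ) ≠ 0 := by
              rw [Ne, Nat.descFactorial_eq_zero_iff_lt]
              have := hσ i
              omega
            exact mul_ne_zero (pow_ne_zero _ two_ne_zero) (Nat.cast_ne_zero.mpr hne)
        · exact h1
      set g : Fin s → ℝ[X] :=
        fun i => derivative^[((σ i : Fin s) : ℕ)] (physHermite (d i)) with hg
      have hlhs : ∀ i : Fin s, (Matrix.of fun (i : Fin s) (j : Fin s) =>
          (fun p : ℝ[X] => derivative p)^[(i:ℕ)] (physHermite (d j))) (σ i) i = g i := by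
        intro i; rfl
      rw [Finset.prod_congr rfl fun i _ => hlhs i]
      have hg_ne : ∀ i, g i ≠ 0 := by
        intro i h0
        have h1 := (hfac i).2
        have h0'' : (⇑derivative)^[((σ i : Fin s) : ℕ)] (physHermite (d i)) = 0 := h0
        rw [h0''] at h1
        simp only [Polynomial.coeff_zero] at h1
        have hne : (d i).descFactorial ((σ i : Fin s) : ℕ) ≠ 0 := by
          rw [Ne, Nat.descFactorial_eq_zero_iff_lt]
          have := hσ i
          omega
        exact (mul_ne_zero (pow_ne_zero _ two_ne_zero) (Nat.cast_ne_zero.mpr hne)) h1.symm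
      have hdeg : (∏ i, g i).natDegree = N := by
        rw [Polynomial.natDegree_prod _ _ (fun i _ => hg_ne i)]
        have h2 : ∀ i : Fin s, (g i).natDegree = d i - ((σ i : Fin s) : ℕ) :=
          fun i => (hfac i).1
        rw [Finset.sum_congr rfl fun i _ => h2 i, hN]
        rw [Finset.sum_tsub_distrib Finset.univ (fun i _ => hσ i), Finset.sum_tsub_distrib Finset.univ (fun i _ => hdj i)]
        congr 1
        exact Equiv.sum_comp σ (fun j : Fin s => (j : ℕ))
      have hcoeff : (∏ i, g i).coeff N = (∏ i, g i).leadingCoeff := by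
        rw [Polynomial.leadingCoeff, hdeg]
      rw [hcoeff, Polynomial.leadingCoeff_prod]
      refine Finset.prod_congr rfl fun i _ => ?_
      rw [Polynomial.leadingCoeff, (hfac i).1, (hfac i).2]
      rfl
    · -- bad permutation : some factor is zero
      push_neg at hσ
      obtain ⟨i₀, hi₀⟩ := hσ
      have hz : (fun q : ℝ[X] => derivative q)^[((σ i₀ : Fin s) : ℕ)] (physHermite (d i₀)) = 0 := by
        rw [iterate_deriv_coe]
        apply Polynomial.iterate_derivative_eq_zero
        rw [physHermite_natDegree]
        omega
      rw [Finset.prod_eq_zero (Finset.mem_univ i₀) (by rw [Matrix.of_apply]; exact hz)]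
      rw [Finset.prod_eq_zero (Finset.mem_univ i₀)
        (by simp only [Matrix.of_apply]
            rw [Nat.descFactorial_eq_zero_iff_lt.mpr hi₀, Nat.cast_zero, mul_zero])]
      simp
  -- now show the target determinant is nonzero
  intro hW
  rw [hW, Polynomial.coeff_zero] at key
  have hdetB : (Matrix.of (fun i j : Fin s =>
      ((2:ℝ) ^ (d j) * ((d j).descFactorial (i : ℕ) : ℝ)))).det ≠ 0 := by
    erw [Matrix.det_mul_row (fun j : Fin s => (2:ℝ) ^ (d j))
      (Matrix.of fun i j : Fin s => (((d j).descFactorial (i : ℕ) : ℝ)))]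
    apply mul_ne_zero
    · exact Finset.prod_ne_zero_iff.mpr fun j _ => pow_ne_zero _ two_ne_zero
    · have htr : Matrix.det (Matrix.of fun i j : Fin s => (((d j).descFactorial (i : ℕ) : ℝ)))
          = (Matrix.of (fun i j : Fin s =>
              ((descPochhammer ℝ (j : ℕ)).eval ((d i : ℝ))))).det := by
        rw [← Matrix.det_transpose]
        congr 1
        ext i j
        simp only [Matrix.transpose_apply, Matrix.of_apply]
        rw [descPochhammer_eval_eq_descFactorial]
      rw [htr, ← Matrix.det_eval_matrixOfPolynomials_eq_det_vandermonde
        (fun i : Fin s => ((d i : ℝ))) (fun i : Fin s => descPochhammer ℝ (i : ℕ))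
        (fun i => descPochhammer_natDegree ℝ (i : ℕ))
        (fun i => monic_descPochhammer ℝ (i : ℕ))]
      rw [Matrix.det_vandermonde]
      refine Finset.prod_ne_zero_iff.mpr fun i _ => ?_
      refine Finset.prod_ne_zero_iff.mpr fun j hj => ?_
      rw [Finset.mem_Ioi] at hj
      have : d i < d j := hd hj
      have : (d i : ℝ) < (d j : ℝ) := by exact_mod_cast this
      exact sub_ne_zero_of_ne (ne_of_gt this)
  exact hdetB key.symm


lemma darboux_step (W φ ψ P : ℝ[X]) (a b : ℝ) (hW : W ≠ 0)
    (h1 : W * derivative (derivative φ) - 2*(X*W + derivative W)*derivative φ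
        + (derivative (derivative W) + 2*X*derivative W + C (2*a)*W)*φ = 0)
    (h2 : W * derivative (derivative ψ) - 2*(X*W + derivative W)*derivative ψ
        + (derivative (derivative W) + 2*X*derivative W + C (2*b)*W)*ψ = 0)
    (h3 : W * P = φ * derivative ψ - ψ * derivative φ) :
    φ * derivative (derivative P) - 2*(X*φ + derivative φ)*derivative P
        + (derivative (derivative φ) + 2*X*derivative φ + C (2*b - 2)*φ)*P = 0 := by
  have d1 := congrArg derivative h1
  have d2 := congrArg derivative h2
  have d3 := congrArg derivative h3
  have dd3 := congrArg derivative d3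
  simp only [derivative_mul, derivative_add, derivative_sub, derivative_X, derivative_C,
    derivative_ofNat, derivative_zero, zero_mul, mul_zero, zero_add, add_zero, mul_one,
    one_mul, map_sub, map_mul, map_ofNat] at d1 d2 d3 dd3 h1 h2 h3 ⊢
  apply mul_left_cancel₀ (pow_ne_zero 3 hW)
  linear_combination (W^2*φ) * dd3
    + (-(2*W*derivative W*φ) - 2*W^2*derivative φ - 2*X*W^2*φ) * d3
    + (2*(derivative W)^2*φ - W*(derivative (derivative W))*φ + 2*W*(derivative W)*(derivative φ)
        + W^2*(derivative (derivative φ)) - 2*W^2*φ + 2*(C b)*W^2*φ + 2*X*W*(derivative W)*φ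
        + 2*X*W^2*(derivative φ)) * h3
    + (-(W*φ*ψ)) * d1
    + (W*φ^2) * d2
    + ((derivative W)*φ*ψ + W*(derivative φ)*ψ) * h1
    + (-((derivative W)*φ^2) - W*φ*(derivative φ)) * h2


section Chain

lemma Wron_def {m : ℕ} (f : Fin m → Polynomial ℝ) : Wron f = WronS (fun i => (i : ℕ)) f := rfl

lemma derivative_Wron {t : ℕ} (h : Fin (t+1) → ℝ[X]) :
    derivative (Wron h) = WronS (fun i => if i = Fin.last t then t+1 else (i:ℕ)) h := by
  rw [Wron_def, derivative_WronS]
  rw [Finset.sum_eq_single (Fin.last t)]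
  · congr 1
    funext i
    by_cases hi : i = Fin.last t
    · subst hi
      rw [Function.update_self, if_pos rfl, Fin.val_last]
    · rw [Function.update_of_ne hi, if_neg hi]
  · intro r _ hr
    have hrt : (r : ℕ) < t := Fin.val_lt_last hr
    refine WronS_eq_zero _ _ (i₁ := r) (i₂ := ⟨(r:ℕ)+1, by omega⟩) ?_ ?_
    · exact Fin.ne_of_val_ne (by simp)
    · rw [Function.update_self, Function.update_of_ne (Fin.ne_of_val_ne (by simp))]
  · intro hl
    exact absurd (Finset.mem_univ _) hl

lemma succAbove_uu_val {s : ℕ} (i : Fin (s+1)) :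
    (((uu (n:=s)).succAbove i : Fin (s+2)) : ℕ) = if i = Fin.last s then s+1 else (i:ℕ) := by
  by_cases h : i = Fin.last s
  · subst h
    rw [if_pos rfl]
    have hc : ¬ (Fin.castSucc (Fin.last s) < uu (n:=s)) := by
      simp [Fin.lt_def, uu]
    rw [Fin.succAbove, if_neg hc]
    simp
  · rw [if_neg h]
    have hlt : (i : ℕ) < s := Fin.val_lt_last h
    have hc : Fin.castSucc i < uu (n:=s) := by
      simp only [Fin.lt_def, Fin.coe_castSucc, uu]
      exact hlt
    rw [Fin.succAbove, if_pos hc]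
    simp

lemma vv_eq_last {s : ℕ} : (vv (n:=s)) = Fin.last (s+1) := rfl

variable {s : ℕ} (F : Fin s → ℝ[X]) (p g : ℝ[X])

lemma hGmid (j : Fin (s+1)) :
    (Fin.snoc (Fin.snoc F p) g : Fin (s+2) → ℝ[X]) ((uu (n:=s)).succAbove j)
      = (Fin.snoc F g : Fin (s+1) → ℝ[X]) j := by
  refine Fin.lastCases ?_ ?_ j
  · have h : (uu (n:=s)).succAbove (Fin.last s) = Fin.last (s+1) := by
      ext
      rw [succAbove_uu_val, if_pos rfl, Fin.val_last]
    rw [h, Fin.snoc_last, Fin.snoc_last]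
  · intro k
    have h : (uu (n:=s)).succAbove (Fin.castSucc k) = Fin.castSucc (Fin.castSucc k) := by
      ext
      rw [succAbove_uu_val, if_neg (Fin.ne_of_val_ne (by simp; omega))]
      simp
    rw [h, Fin.snoc_castSucc, Fin.snoc_castSucc, Fin.snoc_castSucc]

noncomputable def bigA : Matrix (Fin (s+2)) (Fin (s+2)) ℝ[X] :=
  Matrix.of fun i j : Fin (s+2) =>
    (fun q : ℝ[X] => derivative q)^[(i : ℕ)] ((Fin.snoc (Fin.snoc F p) g : Fin (s+2) → ℝ[X]) j)

lemma bigA_det : (bigA F p g).det = Wron (Fin.snoc (Fin.snoc F p) g) := rfl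

lemma bigA_inner :
    ((bigA F p g).submatrix (Fin.castLE (by omega : s ≤ s + 2))
      (Fin.castLE (by omega))).det = Wron F := by
  have hm : (bigA F p g).submatrix (Fin.castLE (by omega : s ≤ s + 2)) (Fin.castLE (by omega))
      = Matrix.of fun i j : Fin s => (fun q : ℝ[X] => derivative q)^[(i : ℕ)] (F j) := by
    ext i j
    simp only [Matrix.submatrix_apply, Matrix.of_apply, bigA]
    have hcol : (Fin.castLE (by omega : s ≤ s + 2) j : Fin (s+2))
        = Fin.castSucc (Fin.castSucc j) := by
      ext; simp
    rw [hcol, Fin.snoc_castSucc, Fin.snoc_castSucc]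
    rfl
  rw [hm]
  rfl

lemma bigA_vv_vv :
    ((bigA F p g).submatrix (vv (n:=s)).succAbove (vv (n:=s)).succAbove).det
      = Wron (Fin.snoc F p) := by
  have hm : (bigA F p g).submatrix (vv (n:=s)).succAbove (vv (n:=s)).succAbove
      = Matrix.of fun i j : Fin (s+1) =>
          (fun q : ℝ[X] => derivative q)^[(i : ℕ)] ((Fin.snoc F p : Fin (s+1) → ℝ[X]) j) := by
    ext i j
    simp only [Matrix.submatrix_apply, Matrix.of_apply, bigA, vv_eq_last, Fin.succAbove_last,
      Fin.snoc_castSucc, Fin.coe_castSucc]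
  rw [hm]
  rfl

lemma bigA_vv_uu :
    ((bigA F p g).submatrix (vv (n:=s)).succAbove (uu (n:=s)).succAbove).det
      = Wron (Fin.snoc F g) := by
  have hm : (bigA F p g).submatrix (vv (n:=s)).succAbove (uu (n:=s)).succAbove
      = Matrix.of fun i j : Fin (s+1) =>
          (fun q : ℝ[X] => derivative q)^[(i : ℕ)] ((Fin.snoc F g : Fin (s+1) → ℝ[X]) j) := by
    ext i j
    simp only [Matrix.submatrix_apply, Matrix.of_apply, bigA, vv_eq_last, Fin.succAbove_last,
      Fin.coe_castSucc]
    rw [hGmid]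
  rw [hm]
  rfl

lemma bigA_uu_vv :
    ((bigA F p g).submatrix (uu (n:=s)).succAbove (vv (n:=s)).succAbove).det
      = derivative (Wron (Fin.snoc F p)) := by
  rw [derivative_Wron]
  have hm : (bigA F p g).submatrix (uu (n:=s)).succAbove (vv (n:=s)).succAbove
      = Matrix.of fun i j : Fin (s+1) =>
          (fun q : ℝ[X] => derivative q)^[if i = Fin.last s then s+1 else (i:ℕ)]
            ((Fin.snoc F p : Fin (s+1) → ℝ[X]) j) := by
    ext i j
    simp only [Matrix.submatrix_apply, Matrix.of_apply, bigA, vv_eq_last, Fin.succAbove_last,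
      Fin.snoc_castSucc, succAbove_uu_val]
  rw [hm]
  rfl

lemma bigA_uu_uu :
    ((bigA F p g).submatrix (uu (n:=s)).succAbove (uu (n:=s)).succAbove).det
      = derivative (Wron (Fin.snoc F g)) := by
  rw [derivative_Wron]
  have hm : (bigA F p g).submatrix (uu (n:=s)).succAbove (uu (n:=s)).succAbove
      = Matrix.of fun i j : Fin (s+1) =>
          (fun q : ℝ[X] => derivative q)^[if i = Fin.last s then s+1 else (i:ℕ)]
            ((Fin.snoc F g : Fin (s+1) → ℝ[X]) j) := by
    ext i j
    simp only [Matrix.submatrix_apply, Matrix.of_apply, bigA, succAbove_uu_val]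
    rw [hGmid]
  rw [hm]
  rfl

theorem chain : ∀ (s : ℕ) (d : Fin s → ℕ), StrictMono d → ∀ m : ℕ,
    Wron (fun j => physHermite (d j)) *
        derivative (derivative (Wron (Fin.snoc (fun j => physHermite (d j)) (physHermite m))))
      - 2 * (X * Wron (fun j => physHermite (d j)) + derivative (Wron (fun j => physHermite (d j))))
          * derivative (Wron (Fin.snoc (fun j => physHermite (d j)) (physHermite m)))
      + (derivative (derivative (Wron (fun j => physHermite (d j))))
          + 2 * X * derivative (Wron (fun j => physHermite (d j)))
          + C (2 * (m : ℝ) - 2 * (s : ℝ)) * Wron (fun j => physHermite (d j)))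
          * Wron (Fin.snoc (fun j => physHermite (d j)) (physHermite m)) = 0 := by
  intro s
  induction s with
  | zero =>
    intro d _ m
    have hW : Wron (fun j : Fin 0 => physHermite (d j)) = 1 := Matrix.det_fin_zero
    have hP : Wron (Fin.snoc (fun j : Fin 0 => physHermite (d j)) (physHermite m))
        = physHermite m := by
      rw [Wron]
      rw [Matrix.det_fin_one]
      show (Fin.snoc (fun j : Fin 0 => physHermite (d j)) (physHermite m) : Fin 1 → ℝ[X]) 0 = _
      exact Fin.snoc_last _ _
    rw [hW, hP]
    have hode := physHermite_ode m
    simp only [derivative_one, derivative_zero, Nat.cast_zero, mul_zero, sub_zero]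
    linear_combination hode
  | succ s ih =>
    intro d hd m
    set F : Fin s → ℝ[X] := fun j => physHermite (d (Fin.castSucc j)) with hF
    set W : ℝ[X] := Wron F with hWdef
    set φ : ℝ[X] := Wron (Fin.snoc F (physHermite (d (Fin.last s)))) with hφdef
    set ψ : ℝ[X] := Wron (Fin.snoc F (physHermite m)) with hψdef
    set P : ℝ[X] := Wron (Fin.snoc (Fin.snoc F (physHermite (d (Fin.last s))))
      (physHermite m)) with hPdef
    have hdF : StrictMono (fun j : Fin s => d (Fin.castSucc j)) := by
      intro i j hij
      exact hd (by exact Fin.castSucc_lt_castSucc_iff.mpr hij)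
    have hW : W ≠ 0 := by
      rw [hWdef, Wron_def]
      exact wron_hermite_ne_zero (fun j => d (Fin.castSucc j)) hdF
    have h1 := ih (fun j => d (Fin.castSucc j)) hdF (d (Fin.last s))
    have h2 := ih (fun j => d (Fin.castSucc j)) hdF m
    -- Jacobi identity from Desnanot–Jacobi
    have hdj := desnanot_jacobi (bigA F (physHermite (d (Fin.last s))) (physHermite m))
    rw [bigA_det, bigA_inner, bigA_vv_vv, bigA_vv_uu, bigA_uu_vv, bigA_uu_uu] at hdj
    have h3 : W * P = φ * derivative ψ - ψ * derivative φ := by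
      rw [hWdef, hφdef, hψdef, hPdef]
      linear_combination -hdj
    rw [show (2 * ((d (Fin.last s) : ℕ) : ℝ) - 2 * (s:ℝ))
      = 2 * (((d (Fin.last s) : ℕ) : ℝ) - (s:ℝ)) from by ring] at h1
    rw [show (2 * (m:ℝ) - 2 * (s:ℝ)) = 2 * ((m:ℝ) - (s:ℝ)) from by ring] at h2
    have key := darboux_step W φ ψ P (((d (Fin.last s) : ℕ) : ℝ) - (s:ℝ))
      ((m:ℝ) - (s:ℝ)) hW (by linear_combination h1) (by linear_combination h2) h3
    -- rewrite the goal in terms of φ and P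
    have hfam : (fun j : Fin (s+1) => physHermite (d j))
        = Fin.snoc F (physHermite (d (Fin.last s))) := by
      funext j
      refine Fin.lastCases ?_ ?_ j
      · rw [Fin.snoc_last]
      · intro k
        rw [Fin.snoc_castSucc]
    have hgoalφ : Wron (fun j : Fin (s+1) => physHermite (d j)) = φ := by
      rw [hfam, hφdef]
    have hgoalP : Wron (Fin.snoc (fun j : Fin (s+1) => physHermite (d j)) (physHermite m))
        = P := by
      rw [hfam, hPdef]
    rw [hgoalφ, hgoalP]
    have hc : C (2 * (m : ℝ) - 2 * ((s+1 : ℕ) : ℝ))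
        = C (2 * ((m:ℝ) - (s:ℝ)) - 2) := by
      congr 1
      push_cast
      ring
    rw [hc]
    linear_combination key

end Chain


/-- Eq. (6): the second-order differential equation for `P_n`, written as a
polynomial identity:
`H_λ P_n'' - 2(x H_λ + H_λ') P_n' + (H_λ'' + 2x H_λ' + (2n - 2|λ|) H_λ) P_n = 0`. -/
theorem XHermite_differential_equation
    (r : ℕ) (lam : Fin r → ℕ) (hpart : IsPartition r lam)
    (n : ℕ) (hn : XDegSeq r lam n) :
    genHermite r lam * derivative (derivative (XHermite r lam n))
      - 2 * (X * genHermite r lam + derivative (genHermite r lam)) *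
          derivative (XHermite r lam n)
      + (derivative (derivative (genHermite r lam))
          + 2 * X * derivative (genHermite r lam)
          + Polynomial.C (2 * (n : ℝ) - 2 * ((∑ i, lam i : ℕ) : ℝ)) * genHermite r lam) *
          XHermite r lam n = 0 := by
  set d : Fin r → ℕ := fun j => lam (Fin.rev j) + (j : ℕ) with hd_def
  have hd : StrictMono d := by
    intro i j hij
    have h1 : Fin.rev j < Fin.rev i := by
      rw [Fin.rev_lt_rev]
      exact hij
    have h2 : lam (Fin.rev i) ≤ lam (Fin.rev j) := hpart.1 _ _ (le_of_lt h1)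
    have h3 : (i : ℕ) < (j : ℕ) := hij
    simp only [hd_def]
    omega
  set m : ℕ := n + r - ∑ i, lam i with hm_def
  have hgen : genHermite r lam = Wron (fun j => physHermite (d j)) := rfl
  have hfun : (fun j : Fin (r + 1) =>
      if h : (j : ℕ) < r then physHermite (lam (Fin.rev ⟨(j : ℕ), h⟩) + j)
      else physHermite (n + r - ∑ i, lam i))
      = Fin.snoc (fun j : Fin r => physHermite (d j)) (physHermite m) := by
    funext j
    refine Fin.lastCases ?_ ?_ j
    · rw [Fin.snoc_last, dif_neg (by simp)]
    · intro k
      rw [Fin.snoc_castSucc, dif_pos (by simpa using k.isLt)]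
      simp [hd_def]
  have hX : XHermite r lam n
      = Wron (Fin.snoc (fun j => physHermite (d j)) (physHermite m)) :=
    congrArg Wron hfun
  have hchain := chain r d hd m
  have hc : Polynomial.C (2 * (n : ℝ) - 2 * ((∑ i, lam i : ℕ) : ℝ))
      = Polynomial.C (2 * (m : ℝ) - 2 * (r : ℝ)) := by
    congr 1
    have hle := hn.1
    have : ((m : ℕ) : ℝ) = (n : ℝ) + (r : ℝ) - ((∑ i, lam i : ℕ) : ℝ) := by
      rw [hm_def]
      push_cast [Nat.cast_sub hle]
      ring
    rw [this]
    ring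
  rw [hgen, hX, hc]
  linear_combination hchain
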